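/- Let X be a compact topological space and let L be a bounded linear operator on the Banach space C(X, ℝ) of real-valued continuous functions with the supremum norm, which is positive in the sense that f ≥ 0 pointwise implies Lf ≥ 0 pointwise. Assume there exist ρ > 0 and g ∈ C(X, ℝ) with g(x) > 0 for every x ∈ X and Lg = ρ·g. Then there exists C > 0 such that ‖Lⁿ f‖_∞ ≤ C ρⁿ ‖f‖_∞ for all n ∈ ℕ and all f ∈ C(X, ℝ); in particular ker((L − ρ·Id)²) = ker(L − ρ·Id), i.e. the eigenvalue ρ has no nontrivial Jordan block. -/

import Mathlib

/-- Iterated positivity. -/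
lemma pow_pos_aux {X : Type*} [TopologicalSpace X] [CompactSpace X]
    (L : C(X, ℝ) →L[ℝ] C(X, ℝ))
    (hpos : ∀ f : C(X, ℝ), (∀ x, 0 ≤ f x) → ∀ x, 0 ≤ L f x) :
    ∀ (n : ℕ) (f : C(X, ℝ)), (∀ x, 0 ≤ f x) → ∀ x, 0 ≤ (L ^ n) f x := by
  intro n
  induction n with
  | zero => intro f hf x; simpa using hf x
  | succ n ih =>
    intro f hf x
    rw [pow_succ']
    exact hpos _ (ih f hf) x

lemma pow_eig_aux {X : Type*} [TopologicalSpace X] [CompactSpace X]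
    (L : C(X, ℝ) →L[ℝ] C(X, ℝ)) (ρ : ℝ) (g : C(X, ℝ)) (hLg : L g = ρ • g) :
    ∀ n : ℕ, (L ^ n) g = ρ ^ n • g := by
  intro n
  induction n with
  | zero => simp
  | succ n ih =>
    rw [pow_succ', ContinuousLinearMap.mul_apply, ih, map_smul, hLg, smul_smul, ← pow_succ]

/-- A positive bounded operator on `C(X, ℝ)` (`X` compact) admitting a
strictly positive eigenfunction `g` with eigenvalue `ρ > 0` satisfies
`‖Lⁿ f‖_∞ ≤ C ρⁿ ‖f‖_∞`; in particular the eigenvalue `ρ` has no nontrivial Jordan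
block. -/
theorem stmt3 {X : Type*} [TopologicalSpace X] [CompactSpace X]
    (L : C(X, ℝ) →L[ℝ] C(X, ℝ))
    (hpos : ∀ f : C(X, ℝ), (∀ x, 0 ≤ f x) → ∀ x, 0 ≤ L f x)
    (ρ : ℝ) (hρ : 0 < ρ) (g : C(X, ℝ)) (hg : ∀ x, 0 < g x)
    (hLg : L g = ρ • g) :
    (∃ C > 0, ∀ (n : ℕ) (f : C(X, ℝ)), ‖(L ^ n) f‖ ≤ C * ρ ^ n * ‖f‖) ∧
      LinearMap.ker (((L - ρ • (1 : C(X, ℝ) →L[ℝ] C(X, ℝ))) ^ 2 : C(X, ℝ) →L[ℝ] C(X, ℝ)) : C(X, ℝ) →ₗ[ℝ] C(X, ℝ))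
        = LinearMap.ker ((L - ρ • (1 : C(X, ℝ) →L[ℝ] C(X, ℝ)) : C(X, ℝ) →L[ℝ] C(X, ℝ)) : C(X, ℝ) →ₗ[ℝ] C(X, ℝ)) := by
  -- The growth bound
  have hbound : ∃ C > 0, ∀ (n : ℕ) (f : C(X, ℝ)), ‖(L ^ n) f‖ ≤ C * ρ ^ n * ‖f‖ := by
    by_cases hX : Nonempty X
    · -- m = min of g
      obtain ⟨x₀, -, hx₀⟩ := isCompact_univ.exists_isMinOn (Set.univ_nonempty)
        (g.continuous.continuousOn)
      set m := g x₀ with hm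
      have hm0 : 0 < m := hg x₀
      have hmle : ∀ x, m ≤ g x := fun x => hx₀ (Set.mem_univ x)
      have hgnorm : 0 < ‖g‖ :=
        lt_of_lt_of_le hm0 (le_trans (le_abs_self _) (g.norm_coe_le_norm x₀))
      refine ⟨‖g‖ / m, by positivity, ?_⟩
      intro n f
      set c := ‖f‖ / m with hc
      have hc0 : 0 ≤ c := by positivity
      -- f ≤ c • g and -f ≤ c • g pointwise
      have key : ∀ x, |(L ^ n) f x| ≤ c * ρ ^ n * g x := by
        have h1 : ∀ x, 0 ≤ (c • g - f) x := by
          intro x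
          have : f x ≤ c * g x := by
            calc f x ≤ ‖f‖ := le_trans (le_abs_self _) (f.norm_coe_le_norm x)
            _ = (‖f‖ / m) * m := by field_simp
            _ ≤ c * g x := by
                apply mul_le_mul_of_nonneg_left (hmle x) (by positivity)
          simpa [sub_nonneg] using this
        have h2 : ∀ x, 0 ≤ (c • g + f) x := by
          intro x
          have : -f x ≤ c * g x := by
            calc -f x ≤ ‖f‖ := le_trans (neg_le_abs _) (f.norm_coe_le_norm x)
            _ = (‖f‖ / m) * m := by field_simp
            _ ≤ c * g x := by
                apply mul_le_mul_of_nonneg_left (hmle x) (by positivity)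
          simpa [neg_le_iff_add_nonneg] using (neg_le_iff_add_nonneg.mp this)
        intro x
        have e1 := pow_pos_aux L hpos n (c • g - f) h1 x
        have e2 := pow_pos_aux L hpos n (c • g + f) h2 x
        rw [map_sub, map_smul, pow_eig_aux L ρ g hLg n] at e1
        rw [map_add, map_smul, pow_eig_aux L ρ g hLg n] at e2
        simp only [ContinuousMap.sub_apply, ContinuousMap.add_apply, ContinuousMap.smul_apply,
          smul_eq_mul, sub_nonneg] at e1 e2
        rw [abs_le]
        constructor
        · nlinarith [e2]
        · nlinarith [e1]
      have : ‖(L ^ n) f‖ ≤ c * ρ ^ n * ‖g‖ := by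
        apply ContinuousMap.norm_le _ (by positivity) |>.mpr
        intro x
        calc ‖(L ^ n) f x‖ = |(L ^ n) f x| := rfl
        _ ≤ c * ρ ^ n * g x := key x
        _ ≤ c * ρ ^ n * ‖g‖ := by
            apply mul_le_mul_of_nonneg_left _ (by positivity)
            exact le_trans (le_abs_self _) (g.norm_coe_le_norm x)
      calc ‖(L ^ n) f‖ ≤ c * ρ ^ n * ‖g‖ := this
      _ = ‖g‖ / m * ρ ^ n * ‖f‖ := by rw [hc]; ring
    · -- X empty: everything is zero
      have : Subsingleton C(X, ℝ) := ⟨fun a b => ContinuousMap.ext fun x => (hX ⟨x⟩).elim⟩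
      refine ⟨1, one_pos, fun n f => ?_⟩
      have hf : f = 0 := Subsingleton.elim _ _
      simp [hf]
  refine ⟨hbound, ?_⟩
  -- Jordan block part
  obtain ⟨C, hC, hB⟩ := hbound
  set T := L - ρ • (1 : C(X, ℝ) →L[ℝ] C(X, ℝ)) with hT
  apply le_antisymm
  · intro f hf
    rw [LinearMap.mem_ker] at hf ⊢
    have hf2 : T (T f) = 0 := by
      have : (T ^ 2) f = T (T f) := by rw [sq, ContinuousLinearMap.mul_apply]
      rw [← this]; exact hf
    set h := T f with hh
    have hLh : L h = ρ • h := by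
      have := hf2
      rw [hT] at this
      simp only [ContinuousLinearMap.sub_apply, ContinuousLinearMap.smul_apply,
        ContinuousLinearMap.one_apply, sub_eq_zero] at this
      exact this
    have hLf : L f = ρ • f + h := by
      rw [hh, hT]
      simp [sub_add_cancel]
    -- L^(n+1) f = ρ^(n+1) • f + ((n+1) * ρ^n) • h
    have key : ∀ n : ℕ, (L ^ (n + 1)) f = ρ ^ (n + 1) • f + (((n : ℝ) + 1) * ρ ^ n) • h := by
      intro n
      induction n with
      | zero => simpa using hLf
      | succ n ih =>
        rw [pow_succ', ContinuousLinearMap.mul_apply, ih, map_add, map_smul, map_smul,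
          hLf, hLh]
        push_cast
        module
    -- norm estimate
    have hn : ∀ n : ℕ, ((n : ℝ) + 1) * ‖h‖ ≤ (C + 1) * ρ * ‖f‖ := by
      intro n
      have h1 : ‖(((n : ℝ) + 1) * ρ ^ n) • h‖ = ((n : ℝ) + 1) * ρ ^ n * ‖h‖ := by
        have := norm_smul (((n : ℝ) + 1) * ρ ^ n) h
        rwa [Real.norm_eq_abs,
          abs_of_nonneg (by positivity : (0:ℝ) ≤ ((n : ℝ) + 1) * ρ ^ n)] at this
      have h2 : (((n : ℝ) + 1) * ρ ^ n) • h = (L ^ (n + 1)) f - ρ ^ (n + 1) • f := by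
        rw [key n]; abel
      have h3 : ((n : ℝ) + 1) * ρ ^ n * ‖h‖ ≤ ‖(L ^ (n + 1)) f‖ + ρ ^ (n + 1) * ‖f‖ := by
        rw [← h1, h2]
        calc ‖(L ^ (n + 1)) f - ρ ^ (n + 1) • f‖ ≤ ‖(L ^ (n + 1)) f‖ + ‖ρ ^ (n + 1) • f‖ :=
          norm_sub_le _ _
        _ = ‖(L ^ (n + 1)) f‖ + ρ ^ (n + 1) * ‖f‖ := by
            have := norm_smul (ρ ^ (n + 1)) f
            rw [Real.norm_eq_abs, abs_of_nonneg (pow_pos hρ _).le] at this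
            rw [this]
      have h4 : ((n : ℝ) + 1) * ρ ^ n * ‖h‖ ≤ (C + 1) * ρ ^ (n + 1) * ‖f‖ := by
        calc ((n : ℝ) + 1) * ρ ^ n * ‖h‖ ≤ ‖(L ^ (n + 1)) f‖ + ρ ^ (n + 1) * ‖f‖ := h3
        _ ≤ C * ρ ^ (n + 1) * ‖f‖ + ρ ^ (n + 1) * ‖f‖ := by linarith [hB (n + 1) f]
        _ = (C + 1) * ρ ^ (n + 1) * ‖f‖ := by ring
      have hpn : (0:ℝ) < ρ ^ n := pow_pos hρ n
      have : ((n : ℝ) + 1) * ρ ^ n * ‖h‖ ≤ (C + 1) * ρ * ‖f‖ * ρ ^ n := by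
        calc ((n : ℝ) + 1) * ρ ^ n * ‖h‖ ≤ (C + 1) * ρ ^ (n + 1) * ‖f‖ := h4
        _ = (C + 1) * ρ * ‖f‖ * ρ ^ n := by ring
      nlinarith
    have hzero : ‖h‖ = 0 := by
      by_contra hne
      have hpos' : 0 < ‖h‖ := lt_of_le_of_ne (norm_nonneg h) (Ne.symm hne)
      obtain ⟨n, hn'⟩ := exists_nat_gt ((C + 1) * ρ * ‖f‖ / ‖h‖)
      have h6 : (C + 1) * ρ * ‖f‖ / ‖h‖ < (n : ℝ) + 1 := lt_of_lt_of_le hn' (by linarith)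
      have h5 : (C + 1) * ρ * ‖f‖ < ((n : ℝ) + 1) * ‖h‖ := by
        calc (C + 1) * ρ * ‖f‖ = ((C + 1) * ρ * ‖f‖ / ‖h‖) * ‖h‖ := by field_simp
        _ < ((n : ℝ) + 1) * ‖h‖ := mul_lt_mul_of_pos_right h6 hpos'
      linarith [hn n]
    rw [hh] at hzero
    exact norm_eq_zero.mp hzero
  · intro f hf
    rw [LinearMap.mem_ker] at hf ⊢
    rw [ContinuousLinearMap.coe_coe] at hf ⊢
    rw [sq, ContinuousLinearMap.mul_apply, hf, map_zero]
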